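/- Suppose Ψ satisfies Ψ(t) + Ψ(1−t) ≥ 2Ψ(1/2) for all t ∈ [0,1] and Ψ(t) < Ψ(1/2) for all t ∈ [0,1/2). If there is no Condorcet winning response (i.e., for every i there exists j with P(y_i ≻ y_j) < 1/2), then for any Nash equilibrium (π₁*, π₂*), the first-player strategy π₁* is not a point mass (it is a mixed strategy supported on at least two responses). -/

import Mathlib

open Finset

/-- A probability vector on `Fin n`. -/
def IsProb {n : ℕ} (π : Fin n → ℝ) : Prop := (∀ i, 0 ≤ π i) ∧ ∑ i, π i = 1

/-- Expected payoff of the two-player game with payoff matrix `A`. -/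
def payoff {n : ℕ} (A : Fin n → Fin n → ℝ) (π π' : Fin n → ℝ) : ℝ :=
  ∑ i, ∑ j, π i * π' j * A i j

/-- Nash equilibrium of the zero-sum game with payoff matrix `A`. -/
def IsNash {n : ℕ} (A : Fin n → Fin n → ℝ) (π₁ π₂ : Fin n → ℝ) : Prop :=
  IsProb π₁ ∧ IsProb π₂ ∧
  (∀ π, IsProb π → payoff A π π₂ ≤ payoff A π₁ π₂) ∧
  (∀ π', IsProb π' → payoff A π₁ π₂ ≤ payoff A π₁ π')


theorem stmt_3 {n : ℕ} (P : Fin n → Fin n → ℝ) (Ψ : ℝ → ℝ)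
    (hP01 : ∀ i j, 0 ≤ P i j ∧ P i j ≤ 1)
    (hPanti : ∀ i j, P i j + P j i = 1)
    (hNoTie : ∀ i j, i ≠ j → P i j ≠ 1 / 2)
    (hΨsym : ∀ t : ℝ, 0 ≤ t → t ≤ 1 → 2 * Ψ (1 / 2) ≤ Ψ t + Ψ (1 - t))
    (hΨlt : ∀ t : ℝ, 0 ≤ t → t < 1 / 2 → Ψ t < Ψ (1 / 2))
    (hNoCondorcet : ∀ i, ∃ j, P i j < 1 / 2)
    (π₁ π₂ : Fin n → ℝ)
    (hNash : IsNash (fun i j => Ψ (P i j)) π₁ π₂) :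
    1 < (Finset.univ.filter (fun i => 0 < π₁ i)).card := by
  by_contra hcard
  push_neg at hcard
  obtain ⟨⟨h1pos, h1sum⟩, ⟨h2pos, h2sum⟩, hmax, hmin⟩ := hNash
  set A : Fin n → Fin n → ℝ := fun i j => Ψ (P i j) with hA
  -- support nonempty
  have hsupp : (Finset.univ.filter (fun i => 0 < π₁ i)).Nonempty := by
    by_contra h
    rw [Finset.not_nonempty_iff_eq_empty] at h
    have hz : ∑ i, π₁ i = 0 := by
      apply Finset.sum_eq_zero
      intro i _
      by_contra hne
      have hpos : 0 < π₁ i := lt_of_le_of_ne (h1pos i) (Ne.symm hne)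
      have : i ∈ Finset.univ.filter (fun i => 0 < π₁ i) := by simp [hpos]
      simp [h] at this
    linarith
  obtain ⟨i₀, hS⟩ := Finset.card_eq_one.mp
    (le_antisymm hcard (Finset.card_pos.mpr hsupp))
  have hzero : ∀ i, i ≠ i₀ → π₁ i = 0 := by
    intro i hi
    by_contra hne
    have hpos : 0 < π₁ i := lt_of_le_of_ne (h1pos i) (Ne.symm hne)
    have : i ∈ Finset.univ.filter (fun i => 0 < π₁ i) := by simp [hpos]
    rw [hS, Finset.mem_singleton] at this
    exact hi this
  have hone : π₁ i₀ = 1 := by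
    rw [← h1sum, Finset.sum_eq_single i₀]
    · intro b _ hb; exact hzero b hb
    · intro h; exact absurd (Finset.mem_univ i₀) h
  have hpay : ∀ π' : Fin n → ℝ, payoff A π₁ π' = ∑ j, π' j * A i₀ j := by
    intro π'
    unfold payoff
    rw [Finset.sum_eq_single i₀]
    · simp [hone]
    · intro b _ hb; simp [hzero b hb]
    · intro h; exact absurd (Finset.mem_univ i₀) h
  -- lower bound: Ψ(1/2) ≤ payoff π₂ π₂
  have key : Ψ (1 / 2) ≤ payoff A π₂ π₂ := by
    have h2 : 2 * payoff A π₂ π₂ = ∑ i, ∑ j, π₂ i * π₂ j * (A i j + A j i) := by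
      have hswap : payoff A π₂ π₂ = ∑ i, ∑ j, π₂ i * π₂ j * A j i := by
        unfold payoff
        rw [Finset.sum_comm]
        apply Finset.sum_congr rfl; intro i _
        apply Finset.sum_congr rfl; intro j _
        ring
      nth_rewrite 1 [two_mul]
      nth_rewrite 2 [hswap]
      unfold payoff
      rw [← Finset.sum_add_distrib]
      apply Finset.sum_congr rfl; intro i _
      rw [← Finset.sum_add_distrib]
      apply Finset.sum_congr rfl; intro j _
      ring
    have hlb : ∑ i, ∑ j, π₂ i * π₂ j * (2 * Ψ (1 / 2)) ≤
        ∑ i, ∑ j, π₂ i * π₂ j * (A i j + A j i) := by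
      apply Finset.sum_le_sum; intro i _
      apply Finset.sum_le_sum; intro j _
      have hw : 0 ≤ π₂ i * π₂ j := mul_nonneg (h2pos i) (h2pos j)
      apply mul_le_mul_of_nonneg_left _ hw
      have hji : P j i = 1 - P i j := by linarith [hPanti i j]
      have := hΨsym (P i j) (hP01 i j).1 (hP01 i j).2
      simp only [hA]
      rw [hji]
      linarith
    have hconst : ∑ i, ∑ j, π₂ i * π₂ j * (2 * Ψ (1 / 2)) = 2 * Ψ (1 / 2) := by
      have : ∀ i, ∑ j, π₂ i * π₂ j * (2 * Ψ (1 / 2))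
          = π₂ i * (2 * Ψ (1 / 2)) := by
        intro i
        rw [← Finset.sum_mul, ← Finset.mul_sum, h2sum]
        ring
      rw [Finset.sum_congr rfl (fun i _ => this i), ← Finset.sum_mul, h2sum, one_mul]
    linarith
  -- upper bound via Condorcet failure at i₀
  obtain ⟨j₀, hj₀⟩ := hNoCondorcet i₀
  have hδ : IsProb (fun k : Fin n => if k = j₀ then (1:ℝ) else 0) := by
    constructor
    · intro k; dsimp only; split <;> norm_num
    · simp
  have hub : payoff A π₁ (fun k : Fin n => if k = j₀ then (1:ℝ) else 0)
      = Ψ (P i₀ j₀) := by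
    rw [hpay]
    rw [Finset.sum_eq_single j₀] <;> simp +contextual
    simp [hA]
  have h1 := hmax π₂ ⟨h2pos, h2sum⟩
  have h2' := hmin _ hδ
  rw [hub] at h2'
  have hlt := hΨlt (P i₀ j₀) (hP01 i₀ j₀).1 hj₀
  linarith
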